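/- arXiv:2504.15019 — 2 statements merged into one kernel-verified Lean document; each statement's English description precedes it below -/
import Mathlib

section
/- Let g : ℝ^{s₁+s₂} → ℝ² be given componentwise by gⁱ(v) and suppose the pseudo-gradient map ∇g(v) = col(∇_{v¹}g¹(v), ∇_{v²}g²(v)) has Jacobian G(v) such that G(v) + G(v)ᵀ is positive definite for all v. Then (g¹, g²) is diagonally strictly convex, i.e., for all α ≠ β, (α − β)ᵀ∇g(β) + (β − α)ᵀ∇g(α) < 0. -/
open scoped RealInnerProductSpace

theorem stmt_2 {s₁ s₂ : ℕ}
    (g₁ g₂ : EuclideanSpace ℝ (Fin s₁) → EuclideanSpace ℝ (Fin s₂) → ℝ)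
    (hg₁ : ContDiff ℝ 2 (fun p : EuclideanSpace ℝ (Fin s₁) × EuclideanSpace ℝ (Fin s₂) =>
      g₁ p.1 p.2))
    (hg₂ : ContDiff ℝ 2 (fun p : EuclideanSpace ℝ (Fin s₁) × EuclideanSpace ℝ (Fin s₂) =>
      g₂ p.1 p.2))
    -- the pseudo-gradient map ∇g
    (F : EuclideanSpace ℝ (Fin s₁) × EuclideanSpace ℝ (Fin s₂) →
         EuclideanSpace ℝ (Fin s₁) × EuclideanSpace ℝ (Fin s₂))
    (hF : ∀ v, F v = (gradient (fun w => g₁ w v.2) v.1, gradient (fun w => g₂ v.1 w) v.2))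
    (hFdiff : Differentiable ℝ F)
    -- G(v) + G(v)ᵀ positive definite: hᵀ G(v) h > 0 for all h ≠ 0
    (hG : ∀ v h, h ≠ 0 →
      0 < ⟪(fderiv ℝ F v h).1, h.1⟫ + ⟪(fderiv ℝ F v h).2, h.2⟫) :
    ∀ α β : EuclideanSpace ℝ (Fin s₁) × EuclideanSpace ℝ (Fin s₂), α ≠ β →
      ⟪α.1 - β.1, (F β).1⟫ + ⟪α.2 - β.2, (F β).2⟫
        + ⟪β.1 - α.1, (F α).1⟫ + ⟪β.2 - α.2, (F α).2⟫ < 0 := by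
  intro α β hne
  set h : EuclideanSpace ℝ (Fin s₁) × EuclideanSpace ℝ (Fin s₂) := α - β with hh
  have hh0 : h ≠ 0 := sub_ne_zero.mpr hne
  set γ : ℝ → EuclideanSpace ℝ (Fin s₁) × EuclideanSpace ℝ (Fin s₂) :=
    fun t => β + t • h with hγ
  set f : ℝ → ℝ := fun t => ⟪(F (γ t)).1, h.1⟫ + ⟪(F (γ t)).2, h.2⟫ with hf
  have hγd : ∀ t : ℝ, HasDerivAt γ h t := by
    intro t
    have : HasDerivAt (fun t : ℝ => t • h) h t := by
      simpa using (hasDerivAt_id t).smul_const h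
    simpa [hγ] using this.const_add β
  have hFd : ∀ t : ℝ, HasDerivAt (fun t => F (γ t)) (fderiv ℝ F (γ t) h) t := by
    intro t
    exact (hFdiff (γ t)).hasFDerivAt.comp_hasDerivAt t (hγd t)
  have hfd : ∀ t : ℝ, HasDerivAt f
      (⟪(fderiv ℝ F (γ t) h).1, h.1⟫ + ⟪(fderiv ℝ F (γ t) h).2, h.2⟫) t := by
    intro t
    have hc1 : HasDerivAt (fun t => (F (γ t)).1) (fderiv ℝ F (γ t) h).1 t := by
      exact
        ((ContinuousLinearMap.fst ℝ (EuclideanSpace ℝ (Fin s₁)) (EuclideanSpace ℝ (Fin s₂))).hasFDerivAt).comp_hasDerivAt t (hFd t)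
    have hc2 : HasDerivAt (fun t => (F (γ t)).2) (fderiv ℝ F (γ t) h).2 t := by
      exact
        ((ContinuousLinearMap.snd ℝ (EuclideanSpace ℝ (Fin s₁)) (EuclideanSpace ℝ (Fin s₂))).hasFDerivAt).comp_hasDerivAt t (hFd t)
    have h1 : HasDerivAt (fun t => ⟪(F (γ t)).1, h.1⟫) ⟪(fderiv ℝ F (γ t) h).1, h.1⟫ t := by
      have := hc1.inner ℝ (hasDerivAt_const t h.1)
      simpa using this
    have h2 : HasDerivAt (fun t => ⟪(F (γ t)).2, h.2⟫) ⟪(fderiv ℝ F (γ t) h).2, h.2⟫ t := by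
      have := hc2.inner ℝ (hasDerivAt_const t h.2)
      simpa using this
    exact h1.add h2
  have hmono : StrictMono f := by
    apply strictMono_of_deriv_pos
    intro t
    rw [(hfd t).deriv]
    exact hG (γ t) h hh0
  have key : f 0 < f 1 := hmono (by norm_num)
  have hγ0 : γ 0 = β := by simp [hγ]
  have hγ1 : γ 1 = α := by simp [hγ, hh]
  have e1 : h.1 = α.1 - β.1 := rfl
  have e2 : h.2 = α.2 - β.2 := rfl
  have := key
  rw [hf] at this
  simp only [hγ0, hγ1, e1, e2] at this
  have s1 : ⟪β.1 - α.1, (F α).1⟫ = - ⟪α.1 - β.1, (F α).1⟫ := by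
    rw [← inner_neg_left]; rw [neg_sub]
  have s2 : ⟪β.2 - α.2, (F α).2⟫ = - ⟪α.2 - β.2, (F α).2⟫ := by
    rw [← inner_neg_left]; rw [neg_sub]
  rw [s1, s2]
  have c1 := real_inner_comm (α.1 - β.1) (F β).1
  have c2 := real_inner_comm (α.2 - β.2) (F β).2
  have c3 := real_inner_comm (α.1 - β.1) (F α).1
  have c4 := real_inner_comm (α.2 - β.2) (F α).2
  linarith
end

section
/- Let Q, S ∈ ℝ^{n×n} be symmetric, R ∈ ℝ^{m×m} symmetric positive definite, and consider W(x) = min_{u ∈ ℝᵐ} { ½xᵀQx + pᵀx + ½uᵀRu + ½(Ax + Bu)ᵀS(Ax+Bu) + sᵀ(Ax+Bu) + m₀ }, with R + BᵀSB positive definite. Then W is a quadratic function of x: W(x) = ½xᵀS̃x + s̃ᵀx + m̃, where S̃ = Q + (A + BE)ᵀS(A + BE) + EᵀRE, s̃ = p + (A+BE)ᵀ(s + SBF) + EᵀRF, for E = −(R + BᵀSB)^{−1}BᵀSA and F = −(R + BᵀSB)^{−1}Bᵀs, and the unique minimizer is u⋆(x) = Ex + F. -/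
open Matrix

private lemma dtrans {k l : ℕ} (M : Matrix (Fin k) (Fin l) ℝ) (a : Fin l → ℝ) (b : Fin k → ℝ) :
    a ⬝ᵥ Mᵀ.mulVec b = M.mulVec a ⬝ᵥ b := by
  rw [Matrix.dotProduct_mulVec, Matrix.vecMul_transpose]

private lemma dsym {k : ℕ} {M : Matrix (Fin k) (Fin k) ℝ} (hM : Mᵀ = M) (a b : Fin k → ℝ) :
    a ⬝ᵥ M.mulVec b = b ⬝ᵥ M.mulVec a := by
  conv_lhs => rw [← hM]
  rw [dtrans, dotProduct_comm]

private lemma quad_expand {k : ℕ} {M : Matrix (Fin k) (Fin k) ℝ} (hM : Mᵀ = M)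
    (a b : Fin k → ℝ) :
    (a + b) ⬝ᵥ M.mulVec (a + b)
      = a ⬝ᵥ M.mulVec a + 2 * (b ⬝ᵥ M.mulVec a) + b ⬝ᵥ M.mulVec b := by
  rw [Matrix.mulVec_add, dotProduct_add, add_dotProduct, add_dotProduct, dsym hM a b]
  ring

theorem stmt_16 {n m : ℕ}
    (Q S : Matrix (Fin n) (Fin n) ℝ) (R : Matrix (Fin m) (Fin m) ℝ)
    (A : Matrix (Fin n) (Fin n) ℝ) (B : Matrix (Fin n) (Fin m) ℝ)
    (p s : Fin n → ℝ) (m₀ : ℝ)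
    (hQ : Qᵀ = Q) (hS : Sᵀ = S) (hR : R.PosDef)
    (hpd : (R + Bᵀ * S * B).PosDef)
    (obj : (Fin n → ℝ) → (Fin m → ℝ) → ℝ)
    (hobj : ∀ x u, obj x u =
      (1 / 2) * (x ⬝ᵥ Q.mulVec x) + p ⬝ᵥ x + (1 / 2) * (u ⬝ᵥ R.mulVec u)
      + (1 / 2) * ((A.mulVec x + B.mulVec u) ⬝ᵥ S.mulVec (A.mulVec x + B.mulVec u))
      + s ⬝ᵥ (A.mulVec x + B.mulVec u) + m₀)
    (E : Matrix (Fin m) (Fin n) ℝ)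
    (hE : E = -((R + Bᵀ * S * B)⁻¹ * (Bᵀ * S * A)))
    (F : Fin m → ℝ)
    (hF : F = -(R + Bᵀ * S * B)⁻¹.mulVec (Bᵀ.mulVec s))
    (Stilde : Matrix (Fin n) (Fin n) ℝ)
    (hStilde : Stilde = Q + (A + B * E)ᵀ * S * (A + B * E) + Eᵀ * R * E)
    (stilde : Fin n → ℝ)
    (hstilde : stilde = p + (A + B * E)ᵀ.mulVec (s + S.mulVec (B.mulVec F))
      + Eᵀ.mulVec (R.mulVec F)) :
    ∃ mtilde : ℝ, ∀ x : Fin n → ℝ,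
      -- the unique minimizer is u⋆(x) = Ex + F …
      (∀ u : Fin m → ℝ, u ≠ E.mulVec x + F → obj x (E.mulVec x + F) < obj x u) ∧
      -- … and the value function is quadratic in x
      obj x (E.mulVec x + F)
        = (1 / 2) * (x ⬝ᵥ Stilde.mulVec x) + stilde ⬝ᵥ x + mtilde := by
  set H : Matrix (Fin m) (Fin m) ℝ := R + Bᵀ * S * B with hH
  have hRsym : Rᵀ = R := hR.isHermitian.eq
  have hdet : IsUnit H.det := hpd.det_pos.ne'.isUnit
  have hHH : H * H⁻¹ = 1 := Matrix.mul_nonsing_inv H hdet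
  -- H (Ex + F) = -(BᵀSA x + Bᵀ s)
  have hstar : ∀ x : Fin n → ℝ,
      H.mulVec (E.mulVec x + F)
        = -(Bᵀ.mulVec (S.mulVec (A.mulVec x)) + Bᵀ.mulVec s) := by
    intro x
    have h1 : H.mulVec (E.mulVec x) = -(Bᵀ.mulVec (S.mulVec (A.mulVec x))) := by
      rw [Matrix.mulVec_mulVec, hE, Matrix.mul_neg, ← Matrix.mul_assoc, hHH, Matrix.one_mul,
        Matrix.neg_mulVec, ← Matrix.mulVec_mulVec, ← Matrix.mulVec_mulVec]
    have h2 : H.mulVec F = -(Bᵀ.mulVec s) := by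
      rw [hF, Matrix.mulVec_neg, Matrix.mulVec_mulVec, hHH, Matrix.one_mulVec]
    rw [Matrix.mulVec_add, h1, h2, neg_add]
  -- the key expansion: obj x u = obj x u⋆ + ½ dᵀ H d  where d = u - u⋆
  have hexp : ∀ (x : Fin n → ℝ) (u : Fin m → ℝ),
      obj x u = obj x (E.mulVec x + F)
        + (1 / 2) * ((u - (E.mulVec x + F)) ⬝ᵥ H.mulVec (u - (E.mulVec x + F))) := by
    intro x u
    set u₀ : Fin m → ℝ := E.mulVec x + F with hu0
    set d : Fin m → ℝ := u - u₀ with hd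
    have hu : u = u₀ + d := by simp [hd]
    rw [hobj x u, hobj x u₀, hu]
    have hAB : A.mulVec x + B.mulVec (u₀ + d)
        = (A.mulVec x + B.mulVec u₀) + B.mulVec d := by
      rw [Matrix.mulVec_add]; abel
    rw [hAB, quad_expand hRsym u₀ d, quad_expand hS (A.mulVec x + B.mulVec u₀) (B.mulVec d),
      dotProduct_add s (A.mulVec x + B.mulVec u₀) (B.mulVec d)]
    have e1 : B.mulVec d ⬝ᵥ S.mulVec (A.mulVec x + B.mulVec u₀)
        = d ⬝ᵥ Bᵀ.mulVec (S.mulVec (A.mulVec x + B.mulVec u₀)) :=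
      (dtrans B d _).symm
    have e2 : s ⬝ᵥ B.mulVec d = d ⬝ᵥ Bᵀ.mulVec s := by
      rw [dtrans, dotProduct_comm]
    have e3 : B.mulVec d ⬝ᵥ S.mulVec (B.mulVec d) = d ⬝ᵥ (Bᵀ * S * B).mulVec d := by
      rw [← Matrix.mulVec_mulVec, ← Matrix.mulVec_mulVec, dtrans]
    have ezero : d ⬝ᵥ R.mulVec u₀
        + d ⬝ᵥ Bᵀ.mulVec (S.mulVec (A.mulVec x + B.mulVec u₀))
        + d ⬝ᵥ Bᵀ.mulVec s = 0 := by
      have hcollect : R.mulVec u₀ + Bᵀ.mulVec (S.mulVec (A.mulVec x + B.mulVec u₀))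
          + Bᵀ.mulVec s
          = H.mulVec u₀ + (Bᵀ.mulVec (S.mulVec (A.mulVec x)) + Bᵀ.mulVec s) := by
        rw [hH, Matrix.add_mulVec, Matrix.mulVec_add, Matrix.mulVec_add,
          ← Matrix.mulVec_mulVec u₀ (Bᵀ * S) B, ← Matrix.mulVec_mulVec _ Bᵀ S,
          Matrix.mulVec_add Bᵀ]
        abel
      have hz : R.mulVec u₀ + Bᵀ.mulVec (S.mulVec (A.mulVec x + B.mulVec u₀))
          + Bᵀ.mulVec s = 0 := by
        rw [hcollect, hu0, hstar x]; abel
      calc d ⬝ᵥ R.mulVec u₀ + d ⬝ᵥ Bᵀ.mulVec (S.mulVec (A.mulVec x + B.mulVec u₀))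
            + d ⬝ᵥ Bᵀ.mulVec s
          = d ⬝ᵥ (R.mulVec u₀ + Bᵀ.mulVec (S.mulVec (A.mulVec x + B.mulVec u₀))
            + Bᵀ.mulVec s) := by rw [dotProduct_add, dotProduct_add]
        _ = 0 := by rw [hz, dotProduct_zero]
    have hHd : d ⬝ᵥ H.mulVec d = d ⬝ᵥ R.mulVec d + d ⬝ᵥ (Bᵀ * S * B).mulVec d := by
      rw [hH, Matrix.add_mulVec, dotProduct_add]
    rw [e1, e2, e3]
    linear_combination ezero - (1 / 2) * hHd
  -- the value of obj at the minimizer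
  refine ⟨(1 / 2) * (F ⬝ᵥ R.mulVec F)
      + (1 / 2) * (B.mulVec F ⬝ᵥ S.mulVec (B.mulVec F)) + s ⬝ᵥ B.mulVec F + m₀, fun x => ?_⟩
  constructor
  · intro u hu
    have hd0 : u - (E.mulVec x + F) ≠ 0 := sub_ne_zero.mpr hu
    have hpos := hpd.dotProduct_mulVec_pos hd0
    simp only [star_trivial] at hpos
    rw [hexp x u]
    have h2 : (0:ℝ)
        < (1 / 2) * ((u - (E.mulVec x + F)) ⬝ᵥ H.mulVec (u - (E.mulVec x + F))) := by
      positivity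
    linarith
  · rw [hobj]
    set M : Matrix (Fin n) (Fin n) ℝ := A + B * E with hM
    have hMx : A.mulVec x + B.mulVec (E.mulVec x + F) = M.mulVec x + B.mulVec F := by
      rw [hM, Matrix.mulVec_add, Matrix.add_mulVec, ← Matrix.mulVec_mulVec]; abel
    rw [hMx, quad_expand hRsym (E.mulVec x) F, quad_expand hS (M.mulVec x) (B.mulVec F),
      dotProduct_add s (M.mulVec x) (B.mulVec F)]
    have hq : x ⬝ᵥ Stilde.mulVec x
        = x ⬝ᵥ Q.mulVec x + M.mulVec x ⬝ᵥ S.mulVec (M.mulVec x)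
          + E.mulVec x ⬝ᵥ R.mulVec (E.mulVec x) := by
      rw [hStilde]
      rw [Matrix.add_mulVec (Q + Mᵀ * S * M) (Eᵀ * R * E) x,
        Matrix.add_mulVec Q (Mᵀ * S * M) x, dotProduct_add, dotProduct_add,
        ← Matrix.mulVec_mulVec x (Mᵀ * S) M, ← Matrix.mulVec_mulVec _ Mᵀ S,
        ← Matrix.mulVec_mulVec x (Eᵀ * R) E, ← Matrix.mulVec_mulVec _ Eᵀ R,
        dtrans, dtrans]
    have hl : stilde ⬝ᵥ x
        = p ⬝ᵥ x + (s ⬝ᵥ M.mulVec x + M.mulVec x ⬝ᵥ S.mulVec (B.mulVec F))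
          + E.mulVec x ⬝ᵥ R.mulVec F := by
      rw [hstilde, add_dotProduct, add_dotProduct, dotProduct_comm (Mᵀ.mulVec _) x,
        dtrans, dotProduct_comm (Eᵀ.mulVec _) x, dtrans, dotProduct_add,
        dotProduct_comm (M.mulVec x) s]
    rw [hq, hl]
    have c1 : F ⬝ᵥ R.mulVec (E.mulVec x) = E.mulVec x ⬝ᵥ R.mulVec F := dsym hRsym _ _
    have c2 : B.mulVec F ⬝ᵥ S.mulVec (M.mulVec x) = M.mulVec x ⬝ᵥ S.mulVec (B.mulVec F) :=
      dsym hS _ _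
    rw [c1, c2]
    ring
end
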